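/- Let G=(V,E) be a connected graph of finite diameter diam(G) and let f, u₀ : V → ℝ be bounded. If (u_n) is the sequence of game values with terminal payoff u₀ and running payoff f, then for all n ≥ 0, sup_V u_n − inf_V u_n ≤ (sup_V u₀ − inf_V u₀) + diam(G)² · (sup_V f − inf_V f). -/

import Mathlib

open Set Filter Topology
open scoped ENNReal Classical

/-- Tug-of-war game values on the graph with adjacency relation `adj`, running payoff `f`
and terminal payoff `u₀`:
`u_{n+1}(x) = (1/2)(sup_{y∼x} u_n(y) + inf_{y∼x} u_n(y)) + f(x)`. -/
noncomputable def gameVal {V : Type*} (adj : V → V → Prop) (f u₀ : V → ℝ) : ℕ → V → ℝ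
  | 0 => u₀
  | n + 1 => fun x =>
      (sSup (gameVal adj f u₀ n '' {y | adj x y}) +
        sInf (gameVal adj f u₀ n '' {y | adj x y})) / 2 + f x

/-- `c` is Player I's long term advantage for running payoff `f`: the game values with
terminal payoff `0` satisfy that `(u_n - n·c)` is uniformly bounded. -/
def IsLTA {V : Type*} (adj : V → V → Prop) (f : V → ℝ) (c : ℝ) : Prop :=
  ∃ C : ℝ, ∀ (n : ℕ) (x : V), |gameVal adj f (fun _ => (0:ℝ)) n x - n * c| ≤ C

/-- `ReachesIn adj n x y`: there is a walk of length exactly `n` from `x` to `y`. -/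
def ReachesIn {V : Type*} (adj : V → V → Prop) : ℕ → V → V → Prop
  | 0 => fun x y => x = y
  | n + 1 => fun x y => ∃ z, adj x z ∧ ReachesIn adj n z y

/-- The graph distance: the least length of a walk from `x` to `y`. -/
noncomputable def graphDist {V : Type*} (adj : V → V → Prop) (x y : V) : ℕ :=
  sInf {n | ReachesIn adj n x y}

/-- The diameter of the graph in the graph metric. -/
noncomputable def graphDiam {V : Type*} (adj : V → V → Prop) : ℕ :=
  sSup {m | ∃ x y : V, graphDist adj x y = m}


namespace TOW

variable {V : Type*} {adj : V → V → Prop}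

lemma reachesIn_trans {m k : ℕ} {x y z : V} (h1 : ReachesIn adj m x y)
    (h2 : ReachesIn adj k y z) : ReachesIn adj (m + k) x z := by
  induction m generalizing x with
  | zero =>
    have hxy : x = y := h1
    subst hxy
    simpa using h2
  | succ m ih =>
    obtain ⟨w, hw, hr⟩ := h1
    rw [Nat.succ_add]
    exact ⟨w, hw, ih hr⟩

lemma reachesIn_snoc {n : ℕ} {x y z : V} (h : ReachesIn adj n x y) (h2 : adj y z) :
    ReachesIn adj (n + 1) x z := by
  induction n generalizing x with
  | zero =>
    have hxy : x = y := h
    subst hxy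
    exact ⟨z, h2, rfl⟩
  | succ n ih =>
    obtain ⟨w, hw, hr⟩ := h
    exact ⟨w, hw, ih hr⟩

lemma reachesIn_symm (hs : Symmetric adj) {n : ℕ} {x y : V} (h : ReachesIn adj n x y) :
    ReachesIn adj n y x := by
  induction n generalizing x with
  | zero => exact (show x = y from h).symm
  | succ n ih =>
    obtain ⟨w, hw, hr⟩ := h
    exact reachesIn_snoc (ih hr) (hs hw)

lemma graphDist_reaches (hd : ∀ a b : V, ∃ n, ReachesIn adj n a b) (x y : V) :
    ReachesIn adj (graphDist adj x y) x y :=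
  Nat.sInf_mem (hd x y)

lemma graphDist_le {n : ℕ} {x y : V} (h : ReachesIn adj n x y) : graphDist adj x y ≤ n :=
  Nat.sInf_le h

lemma graphDist_self (x : V) : graphDist adj x x = 0 := by
  have h0 : ReachesIn adj 0 x x := (rfl : x = x)
  exact Nat.sInf_eq_zero.2 (Or.inl h0)

lemma graphDist_eq_zero_imp (hd : ∀ a b : V, ∃ n, ReachesIn adj n a b) {x y : V}
    (h : graphDist adj x y = 0) : x = y := by
  have r := graphDist_reaches hd x y
  rw [h] at r
  exact r

lemma graphDist_triangle (hd : ∀ a b : V, ∃ n, ReachesIn adj n a b) (x y z : V) :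
    graphDist adj x z ≤ graphDist adj x y + graphDist adj y z :=
  graphDist_le (reachesIn_trans (graphDist_reaches hd x y) (graphDist_reaches hd y z))

lemma graphDist_symm_le (hs : Symmetric adj) (hd : ∀ a b : V, ∃ n, ReachesIn adj n a b)
    (x y : V) : graphDist adj y x ≤ graphDist adj x y :=
  graphDist_le (reachesIn_symm hs (graphDist_reaches hd x y))

lemma graphDist_le_one_of_adj {x y : V} (h : adj x y) : graphDist adj x y ≤ 1 :=
  graphDist_le ⟨y, h, rfl⟩

lemma adj_of_graphDist_eq_one (hd : ∀ a b : V, ∃ n, ReachesIn adj n a b) {x y : V}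
    (h : graphDist adj x y = 1) : adj x y := by
  have r := graphDist_reaches hd x y
  rw [h] at r
  obtain ⟨z, hz, he⟩ := r
  have hzy : z = y := he
  exact hzy ▸ hz

lemma distSet_bddAbove (hdiam : ∃ D : ℕ, ∀ x y : V, ∃ n ≤ D, ReachesIn adj n x y) :
    BddAbove {m | ∃ x y : V, graphDist adj x y = m} := by
  obtain ⟨D, hD⟩ := hdiam
  refine ⟨D, ?_⟩
  rintro m ⟨x, y, rfl⟩
  obtain ⟨n, hn, hr⟩ := hD x y
  exact le_trans (graphDist_le hr) hn

lemma graphDist_le_diam (hdiam : ∃ D : ℕ, ∀ x y : V, ∃ n ≤ D, ReachesIn adj n x y)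
    (x y : V) : graphDist adj x y ≤ graphDiam adj :=
  le_csSup (distSet_bddAbove hdiam) ⟨x, y, rfl⟩

lemma diam_mem (hne : Nonempty V) (hdiam : ∃ D : ℕ, ∀ x y : V, ∃ n ≤ D, ReachesIn adj n x y) :
    ∃ x y : V, graphDist adj x y = graphDiam adj := by
  obtain ⟨x₀⟩ := hne
  have hne' : ({m | ∃ x y : V, graphDist adj x y = m}).Nonempty :=
    ⟨0, ⟨x₀, x₀, graphDist_self x₀⟩⟩
  exact Nat.sSup_mem hne' (distSet_bddAbove hdiam)

/-! real sup/inf helpers -/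

lemma sSup_image_le {g : V → ℝ} {s : Set V} (hs : s.Nonempty) {C : ℝ}
    (h : ∀ z ∈ s, g z ≤ C) : sSup (g '' s) ≤ C := by
  refine csSup_le (hs.image g) ?_
  rintro a ⟨z, hz, rfl⟩
  exact h z hz

lemma le_sSup_image {g : V → ℝ} {s : Set V} {z : V} (hz : z ∈ s) {C : ℝ}
    (h : ∀ w ∈ s, g w ≤ C) : g z ≤ sSup (g '' s) := by
  refine le_csSup ⟨C, ?_⟩ ⟨z, hz, rfl⟩
  rintro a ⟨w, hw, rfl⟩
  exact h w hw

lemma le_sInf_image {g : V → ℝ} {s : Set V} (hs : s.Nonempty) {C : ℝ}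
    (h : ∀ z ∈ s, C ≤ g z) : C ≤ sInf (g '' s) := by
  refine le_csInf (hs.image g) ?_
  rintro a ⟨z, hz, rfl⟩
  exact h z hz

lemma sInf_image_le {g : V → ℝ} {s : Set V} {z : V} (hz : z ∈ s) {C : ℝ}
    (h : ∀ w ∈ s, C ≤ g w) : sInf (g '' s) ≤ g z := by
  refine csInf_le ⟨C, ?_⟩ ⟨z, hz, rfl⟩
  rintro a ⟨w, hw, rfl⟩
  exact h w hw

/-! the potential -/

noncomputable def bb (D j : ℕ) : ℝ := (j : ℝ) * (2 * (D : ℝ) - 1 - (j : ℝ))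

lemma bb_zero (D : ℕ) : bb D 0 = 0 := by simp [bb]

lemma bb_nonneg {D j : ℕ} (h : j ≤ D) (hD : 1 ≤ D) : 0 ≤ bb D j := by
  have h1 : (j : ℝ) ≤ (D : ℝ) := Nat.cast_le.2 h
  have h2 : (1 : ℝ) ≤ (D : ℝ) := by exact_mod_cast Nat.one_le_cast.2 hD
  have h0 : (0 : ℝ) ≤ (j : ℝ) := Nat.cast_nonneg j
  unfold bb
  nlinarith

lemma bb_mono {D e e' : ℕ} (h : e ≤ e') (h2 : e' ≤ D) : bb D e ≤ bb D e' := by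
  rcases eq_or_lt_of_le h with rfl | hlt
  · exact le_refl _
  · have h1 : (e : ℝ) + 1 ≤ (e' : ℝ) := by exact_mod_cast hlt
    have h3 : (e' : ℝ) ≤ (D : ℝ) := Nat.cast_le.2 h2
    have h0 : (0 : ℝ) ≤ (e : ℝ) := Nat.cast_nonneg e
    unfold bb
    nlinarith

lemma bb_ineq1 {D : ℕ} (hD : 2 ≤ D) : bb D 2 / 2 + 1 ≤ bb D 1 := by
  unfold bb
  push_cast
  have h2 : (2 : ℝ) ≤ (D : ℝ) := by exact_mod_cast hD
  nlinarith

lemma bb_ineq2 {D k : ℕ} (h : k + 2 ≤ D) :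
    bb D (min (k + 4) D) + bb D k + 2 ≤ 2 * bb D (k + 2) := by
  rcases le_or_gt (k + 4) D with h4 | h4
  · rw [min_eq_left h4]
    unfold bb
    push_cast
    nlinarith
  · have hD : D = k + 2 ∨ D = k + 3 := by omega
    rcases hD with rfl | rfl
    · rw [min_eq_right (by omega)]
      unfold bb
      push_cast
      nlinarith
    · rw [min_eq_right (by omega)]
      unfold bb
      push_cast
      nlinarith

lemma bb_le_sq {D : ℕ} : bb D D ≤ (D : ℝ) ^ 2 := by
  have h0 : (0 : ℝ) ≤ (D : ℝ) := Nat.cast_nonneg D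
  unfold bb
  nlinarith

/-! game value basics -/

lemma gameVal_succ (f u₀ : V → ℝ) (n : ℕ) (x : V) :
    gameVal adj f u₀ (n + 1) x =
      (sSup (gameVal adj f u₀ n '' {y | adj x y}) +
        sInf (gameVal adj f u₀ n '' {y | adj x y})) / 2 + f x := rfl

lemma gameVal_bound {f u₀ : V → ℝ} (hf : ∃ M : ℝ, ∀ x, |f x| ≤ M)
    (hu : ∃ M : ℝ, ∀ x, |u₀ x| ≤ M) (hnbr : ∀ x : V, {y | adj x y}.Nonempty) (n : ℕ) :
    ∃ C : ℝ, ∀ x, |gameVal adj f u₀ n x| ≤ C := by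
  obtain ⟨Mf, hMf⟩ := hf
  induction n with
  | zero => exact hu
  | succ n ih =>
    obtain ⟨C, hC⟩ := ih
    refine ⟨C + Mf, fun x => ?_⟩
    rw [gameVal_succ]
    have h1 : sSup (gameVal adj f u₀ n '' {y | adj x y}) ≤ C :=
      sSup_image_le (hnbr x) (fun z _ => (abs_le.1 (hC z)).2)
    have h2 : -C ≤ sSup (gameVal adj f u₀ n '' {y | adj x y}) := by
      obtain ⟨z, hz⟩ := hnbr x
      exact le_trans (abs_le.1 (hC z)).1 (le_sSup_image hz (fun w _ => (abs_le.1 (hC w)).2))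
    have h3 : sInf (gameVal adj f u₀ n '' {y | adj x y}) ≤ C := by
      obtain ⟨z, hz⟩ := hnbr x
      exact le_trans (sInf_image_le hz (fun w _ => (abs_le.1 (hC w)).1)) (abs_le.1 (hC z)).2
    have h4 : -C ≤ sInf (gameVal adj f u₀ n '' {y | adj x y}) :=
      le_sInf_image (hnbr x) (fun z _ => (abs_le.1 (hC z)).1)
    have h5 := abs_le.1 (hMf x)
    rw [abs_le]
    constructor <;> [linarith; linarith]

lemma gameVal_zero_mono {f : V → ℝ} (hf : ∃ M : ℝ, ∀ x, |f x| ≤ M)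
    (hne : Nonempty V) (hnbr : ∀ x : V, {y | adj x y}.Nonempty) (n : ℕ) (x : V) :
    gameVal adj f (fun _ => (0:ℝ)) n x + (⨅ z, f z) ≤ gameVal adj f (fun _ => (0:ℝ)) (n + 1) x := by
  obtain ⟨Mf, hMf⟩ := hf
  have hbdd : BddBelow (Set.range f) := ⟨-Mf, by rintro a ⟨z, rfl⟩; exact (abs_le.1 (hMf z)).1⟩
  have hinf : ∀ z : V, (⨅ w, f w) ≤ f z := fun z => ciInf_le hbdd z
  induction n generalizing x with
  | zero =>
    have himg : (fun _ : V => (0:ℝ)) '' {y | adj x y} = {0} :=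
      Set.Nonempty.image_const (hnbr x) 0
    rw [gameVal_succ]
    have h0 : gameVal adj f (fun _ => (0:ℝ)) 0 = fun _ : V => (0:ℝ) := rfl
    rw [h0, himg, csSup_singleton, csInf_singleton]
    show (0:ℝ) + (⨅ z, f z) ≤ (0 + 0) / 2 + f x
    have := hinf x
    linarith
  | succ n ih =>
    have hB := gameVal_bound (u₀ := fun _ => (0:ℝ)) ⟨Mf, hMf⟩ ⟨0, fun z => by simp⟩ hnbr (n + 1)
    obtain ⟨C, hC⟩ := hB
    rw [gameVal_succ, gameVal_succ]
    have h1 : sSup (gameVal adj f (fun _ => (0:ℝ)) n '' {y | adj x y}) + (⨅ z, f z) ≤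
        sSup (gameVal adj f (fun _ => (0:ℝ)) (n + 1) '' {y | adj x y}) := by
      have := sSup_image_le (g := gameVal adj f (fun _ => (0:ℝ)) n) (hnbr x)
        (C := sSup (gameVal adj f (fun _ => (0:ℝ)) (n + 1) '' {y | adj x y}) - (⨅ z, f z))
        (fun z hz => by
          have h2 := ih z
          have h3 : gameVal adj f (fun _ => (0:ℝ)) (n + 1) z ≤
              sSup (gameVal adj f (fun _ => (0:ℝ)) (n + 1) '' {y | adj x y}) :=
            le_sSup_image hz (fun w _ => (abs_le.1 (hC w)).2)
          linarith)
      linarith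
    have h2 : sInf (gameVal adj f (fun _ => (0:ℝ)) n '' {y | adj x y}) + (⨅ z, f z) ≤
        sInf (gameVal adj f (fun _ => (0:ℝ)) (n + 1) '' {y | adj x y}) := by
      refine le_sInf_image (hnbr x) (fun z hz => ?_)
      have h3 : sInf (gameVal adj f (fun _ => (0:ℝ)) n '' {y | adj x y}) ≤
          gameVal adj f (fun _ => (0:ℝ)) n z := by
        obtain ⟨C', hC'⟩ := gameVal_bound (u₀ := fun _ => (0:ℝ)) ⟨Mf, hMf⟩ ⟨0, fun z => by simp⟩ hnbr n
        exact sInf_image_le hz (fun w _ => (abs_le.1 (hC' w)).1)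
      have := ih z
      linarith
    linarith



lemma core_ge2 (hs : Symmetric adj)
    (hdiam : ∃ D : ℕ, ∀ x y : V, ∃ n ≤ D, ReachesIn adj n x y)
    (hne : Nonempty V)
    {f : V → ℝ} (hf : ∃ M : ℝ, ∀ x, |f x| ≤ M)
    (hnbr : ∀ x : V, {y | adj x y}.Nonempty)
    (hD2 : 2 ≤ graphDiam adj) :
    ∀ (n : ℕ) (x y : V),
      gameVal adj f (fun _ => (0:ℝ)) n x - gameVal adj f (fun _ => (0:ℝ)) n y ≤
        bb (graphDiam adj) (graphDist adj x y) * ((⨆ z, f z) - ⨅ z, f z) := by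
  obtain ⟨Mf, hMf⟩ := hf
  have hd : ∀ a b : V, ∃ m, ReachesIn adj m a b := by
    obtain ⟨D₀, hD₀⟩ := hdiam
    intro a b
    obtain ⟨m, _, h⟩ := hD₀ a b
    exact ⟨m, h⟩
  have hdle : ∀ a b : V, graphDist adj a b ≤ graphDiam adj := graphDist_le_diam hdiam
  set D := graphDiam adj with hD
  set v := gameVal adj f (fun _ => (0:ℝ)) with hv
  have hbddA : BddAbove (Set.range f) := ⟨Mf, by rintro a ⟨z, rfl⟩; exact (abs_le.1 (hMf z)).2⟩
  have hbddB : BddBelow (Set.range f) := ⟨-Mf, by rintro a ⟨z, rfl⟩; exact (abs_le.1 (hMf z)).1⟩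
  have hfle : ∀ t : V, f t ≤ (⨆ z, f z) := fun t => le_ciSup hbddA t
  have hfge : ∀ t : V, (⨅ z, f z) ≤ f t := fun t => ciInf_le hbddB t
  have hosc : 0 ≤ (⨆ z, f z) - ⨅ z, f z := by
    obtain ⟨z⟩ := hne
    have h1 := hfle z
    have h2 := hfge z
    linarith
  have hD1 : 1 ≤ D := le_trans (by norm_num) hD2
  intro n
  induction n with
  | zero =>
    intro x y
    have h00 : v 0 x - v 0 y = 0 := by
      show (0:ℝ) - 0 = 0
      norm_num
    rw [h00]
    exact mul_nonneg (bb_nonneg (hdle x y) hD1) hosc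
  | succ n ih =>
    intro x y
    obtain ⟨C, hC⟩ := gameVal_bound (u₀ := fun _ => (0:ℝ)) ⟨Mf, hMf⟩
      ⟨0, fun z => by simp⟩ hnbr n
    rcases Nat.lt_or_ge (graphDist adj x y) 2 with hlt | hge
    · rcases Nat.lt_or_ge (graphDist adj x y) 1 with hlt0 | hge1
      · -- distance 0
        have h0 : graphDist adj x y = 0 := by omega
        have hxy : x = y := graphDist_eq_zero_imp hd h0
        subst hxy
        rw [sub_self, h0, bb_zero, zero_mul]
      · -- distance 1
        have h1 : graphDist adj x y = 1 := by omega
        have hadj : adj x y := adj_of_graphDist_eq_one hd h1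
        have hSup : sSup (v n '' {w | adj x w}) ≤
            v n y + bb D 2 * ((⨆ z, f z) - ⨅ z, f z) := by
          refine sSup_image_le (hnbr x) (fun z hz => ?_)
          have hdist : graphDist adj z y ≤ 2 := by
            have t1 : graphDist adj z x ≤ 1 :=
              le_trans (graphDist_symm_le hs hd x z) (graphDist_le_one_of_adj hz)
            have t2 := graphDist_triangle hd z x y
            omega
          have hih := ih z y
          have hmul := mul_le_mul_of_nonneg_right (bb_mono hdist hD2) hosc
          linarith
        have hInf : sInf (v n '' {w | adj x w}) ≤ v n y :=
          sInf_image_le (show y ∈ {w | adj x w} from hadj)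
            (fun w _ => (abs_le.1 (hC w)).1)
        have hMono : v n y + (⨅ z, f z) ≤ v (n+1) y :=
          gameVal_zero_mono ⟨Mf, hMf⟩ hne hnbr n y
        have hfx : f x - (⨅ z, f z) ≤ (⨆ z, f z) - ⨅ z, f z := by
          have h2 := hfle x
          linarith
        have harith : bb D 2 / 2 + 1 ≤ bb D 1 := bb_ineq1 hD2
        have harith2 : (bb D 2 / 2) * ((⨆ z, f z) - ⨅ z, f z) + ((⨆ z, f z) - ⨅ z, f z) ≤
            bb D 1 * ((⨆ z, f z) - ⨅ z, f z) := by nlinarith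
        rw [h1]
        have hexp : v (n+1) x =
            (sSup (v n '' {w | adj x w}) + sInf (v n '' {w | adj x w})) / 2 + f x := rfl
        rw [hexp]
        linarith
    · -- distance ≥ 2
      obtain ⟨k, hk⟩ : ∃ k, graphDist adj x y = k + 2 :=
        ⟨graphDist adj x y - 2, by omega⟩
      have hkD : k + 2 ≤ D := hk ▸ hdle x y
      have r : ReachesIn adj (k+2) x y := hk ▸ graphDist_reaches hd x y
      obtain ⟨z, hxz, hzy⟩ := r
      have hyz : ReachesIn adj (k+1) y z := reachesIn_symm hs hzy
      obtain ⟨w, hyw, hwz⟩ := hyz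
      have hzw : graphDist adj z w ≤ k := graphDist_le (reachesIn_symm hs hwz)
      set e := min (k + 4) D with he
      have heD : e ≤ D := min_le_right _ _
      have hSupInf : sSup (v n '' {w' | adj x w'}) ≤
          sInf (v n '' {w' | adj y w'}) + bb D e * ((⨆ z, f z) - ⨅ z, f z) := by
        refine sSup_image_le (hnbr x) (fun a ha => ?_)
        have h2 : v n a - bb D e * ((⨆ z, f z) - ⨅ z, f z) ≤
            sInf (v n '' {w' | adj y w'}) := by
          refine le_sInf_image (hnbr y) (fun b hb => ?_)
          have hdist : graphDist adj a b ≤ e := by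
            refine le_min ?_ (hdle a b)
            have t1 : graphDist adj a x ≤ 1 :=
              le_trans (graphDist_symm_le hs hd x a) (graphDist_le_one_of_adj ha)
            have t2 : graphDist adj y b ≤ 1 := graphDist_le_one_of_adj hb
            have t3 := graphDist_triangle hd a x y
            have t4 := graphDist_triangle hd a y b
            omega
          have hih := ih a b
          have hmul := mul_le_mul_of_nonneg_right (bb_mono hdist heD) hosc
          linarith
        linarith
      have hInfx : sInf (v n '' {w' | adj x w'}) ≤ v n z :=
        sInf_image_le (show z ∈ {w' | adj x w'} from hxz)
          (fun w' _ => (abs_le.1 (hC w')).1)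
      have hSupy : v n w ≤ sSup (v n '' {w' | adj y w'}) :=
        le_sSup_image (show w ∈ {w' | adj y w'} from hyw)
          (fun w' _ => (abs_le.1 (hC w')).2)
      have hzwb : v n z - v n w ≤ bb D k * ((⨆ z, f z) - ⨅ z, f z) := by
        have hih := ih z w
        have hmul := mul_le_mul_of_nonneg_right (bb_mono hzw (by omega : k ≤ D)) hosc
        linarith
      have hfxy : f x - f y ≤ (⨆ z, f z) - ⨅ z, f z := by
        have h1 := hfle x
        have h2 := hfge y
        linarith
      have harith : bb D (min (k+4) D) + bb D k + 2 ≤ 2 * bb D (k + 2) := bb_ineq2 hkD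
      rw [← he] at harith
      have harith2 : (bb D e + bb D k + 2) * ((⨆ z, f z) - ⨅ z, f z) ≤
          (2 * bb D (k + 2)) * ((⨆ z, f z) - ⨅ z, f z) :=
        mul_le_mul_of_nonneg_right harith hosc
      rw [hk]
      have hexp1 : v (n+1) x =
          (sSup (v n '' {w' | adj x w'}) + sInf (v n '' {w' | adj x w'})) / 2 + f x := rfl
      have hexp2 : v (n+1) y =
          (sSup (v n '' {w' | adj y w'}) + sInf (v n '' {w' | adj y w'})) / 2 + f y := rfl
      rw [hexp1, hexp2]
      nlinarith [hSupInf, hInfx, hSupy, hzwb, hfxy, harith2]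


lemma core_eq1 (hs : Symmetric adj)
    (hdiam : ∃ D : ℕ, ∀ x y : V, ∃ n ≤ D, ReachesIn adj n x y)
    (hne : Nonempty V)
    {f : V → ℝ} (hf : ∃ M : ℝ, ∀ x, |f x| ≤ M)
    (hnbr : ∀ x : V, {y | adj x y}.Nonempty)
    (hD1 : graphDiam adj = 1) :
    ∀ (n : ℕ) (x y : V), x ≠ y →
      gameVal adj f (fun _ => (0:ℝ)) n x - gameVal adj f (fun _ => (0:ℝ)) n y ≤
        ((⨆ z, f z) - ⨅ z, f z) + min 0 (f x - f y) := by
  obtain ⟨Mf, hMf⟩ := hf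
  have hd : ∀ a b : V, ∃ m, ReachesIn adj m a b := by
    obtain ⟨D₀, hD₀⟩ := hdiam
    intro a b
    obtain ⟨m, _, h⟩ := hD₀ a b
    exact ⟨m, h⟩
  have hdle : ∀ a b : V, graphDist adj a b ≤ 1 := fun a b =>
    hD1 ▸ graphDist_le_diam hdiam a b
  set v := gameVal adj f (fun _ => (0:ℝ)) with hv
  have hbddA : BddAbove (Set.range f) := ⟨Mf, by rintro a ⟨z, rfl⟩; exact (abs_le.1 (hMf z)).2⟩
  have hbddB : BddBelow (Set.range f) := ⟨-Mf, by rintro a ⟨z, rfl⟩; exact (abs_le.1 (hMf z)).1⟩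
  have hfle : ∀ t : V, f t ≤ (⨆ z, f z) := fun t => le_ciSup hbddA t
  have hfge : ∀ t : V, (⨅ z, f z) ≤ f t := fun t => ciInf_le hbddB t
  have hFab : ∀ a b : V, f a - f b ≤ (⨆ z, f z) - ⨅ z, f z := fun a b => by
    have h1 := hfle a
    have h2 := hfge b
    linarith
  have hadj : ∀ a b : V, a ≠ b → adj a b := by
    intro a b hab
    have h1 : graphDist adj a b ≤ 1 := hdle a b
    have h0 : graphDist adj a b ≠ 0 := fun h => hab (graphDist_eq_zero_imp hd h)
    exact adj_of_graphDist_eq_one hd (by omega)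
  intro n
  induction n with
  | zero =>
    intro x y hxy
    have h00 : v 0 x - v 0 y = 0 := by
      show (0:ℝ) - 0 = 0
      norm_num
    rw [h00]
    have h1 := hFab y x
    have h2 : -((⨆ z, f z) - ⨅ z, f z) ≤ min 0 (f x - f y) :=
      le_min (by have := hFab x x; linarith) (by linarith)
    linarith
  | succ n ih =>
    intro x y hxy
    obtain ⟨C, hC⟩ := gameVal_bound (u₀ := fun _ => (0:ℝ)) ⟨Mf, hMf⟩
      ⟨0, fun z => by simp⟩ hnbr n
    have hadjxy : adj x y := hadj x y hxy
    have hadjyx : adj y x := hadj y x (Ne.symm hxy)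
    have hSx : sSup (v n '' {w | adj x w}) ≤ max (v n y) (sSup (v n '' {w | adj y w})) := by
      refine sSup_image_le (hnbr x) (fun a ha => ?_)
      by_cases hay : a = y
      · subst hay
        exact le_max_left _ _
      · have haa : adj y a := hadj y a (fun h => hay h.symm)
        exact le_trans
          (le_sSup_image (show a ∈ {w | adj y w} from haa) (fun w _ => (abs_le.1 (hC w)).2))
          (le_max_right _ _)
    have hix : sInf (v n '' {w | adj x w}) ≤ v n y :=
      sInf_image_le (show y ∈ {w | adj x w} from hadjxy) (fun w _ => (abs_le.1 (hC w)).1)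
    have hSy : v n x ≤ sSup (v n '' {w | adj y w}) :=
      le_sSup_image (show x ∈ {w | adj y w} from hadjyx) (fun w _ => (abs_le.1 (hC w)).2)
    have hiy : min (v n x) (sInf (v n '' {w | adj x w})) ≤ sInf (v n '' {w | adj y w}) := by
      refine le_sInf_image (hnbr y) (fun b hb => ?_)
      by_cases hbx : b = x
      · subst hbx
        exact min_le_left _ _
      · have hbb : adj x b := hadj x b (fun h => hbx h.symm)
        exact le_trans (min_le_right _ _)
          (sInf_image_le (show b ∈ {w | adj x w} from hbb) (fun w _ => (abs_le.1 (hC w)).1))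
    have hterm1 : sSup (v n '' {w | adj x w}) - sSup (v n '' {w | adj y w}) ≤
        max (v n y - v n x) 0 := by
      rcases le_total (v n y) (sSup (v n '' {w | adj y w})) with h | h
      · rw [max_eq_right h] at hSx
        have := le_max_right (v n y - v n x) 0
        linarith
      · rw [max_eq_left h] at hSx
        have := le_max_left (v n y - v n x) 0
        linarith
    have hterm2 : sInf (v n '' {w | adj x w}) - sInf (v n '' {w | adj y w}) ≤
        max (v n y - v n x) 0 := by
      rcases le_total (v n x) (sInf (v n '' {w | adj x w})) with h | h
      · rw [min_eq_left h] at hiy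
        have := le_max_left (v n y - v n x) 0
        linarith
      · rw [min_eq_right h] at hiy
        have := le_max_right (v n y - v n x) 0
        linarith
    have hmax : max (v n y - v n x) 0 ≤ ((⨆ z, f z) - ⨅ z, f z) + min 0 (f y - f x) := by
      refine max_le (ih y x (Ne.symm hxy)) ?_
      have h1 := hFab x y
      have h2 : -((⨆ z, f z) - ⨅ z, f z) ≤ min 0 (f y - f x) :=
        le_min (by have := hFab x x; linarith) (by linarith)
      linarith
    have hminid : min 0 (f y - f x) + (f x - f y) ≤ min 0 (f x - f y) := by
      rcases le_total 0 (f y - f x) with h | h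
      · rw [min_eq_left h]
        exact le_min (by linarith) (by linarith)
      · rw [min_eq_right h]
        exact le_min (by linarith) (by linarith)
    have hexp1 : v (n+1) x =
        (sSup (v n '' {w | adj x w}) + sInf (v n '' {w | adj x w})) / 2 + f x := rfl
    have hexp2 : v (n+1) y =
        (sSup (v n '' {w | adj y w}) + sInf (v n '' {w | adj y w})) / 2 + f y := rfl
    rw [hexp1, hexp2]
    linarith


lemma reduction {f u₀ : V → ℝ} (hf : ∃ M : ℝ, ∀ x, |f x| ≤ M)
    (hu₀ : ∃ M : ℝ, ∀ x, |u₀ x| ≤ M) (hnbr : ∀ x : V, {y | adj x y}.Nonempty) :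
    ∀ (m : ℕ) (x : V),
      gameVal adj f u₀ m x ≤ gameVal adj f (fun _ => (0:ℝ)) m x + (⨆ z, u₀ z) ∧
      gameVal adj f (fun _ => (0:ℝ)) m x + (⨅ z, u₀ z) ≤ gameVal adj f u₀ m x := by
  obtain ⟨Mu, hMu⟩ := hu₀
  have hbu : BddAbove (Set.range u₀) := ⟨Mu, by rintro a ⟨z, rfl⟩; exact (abs_le.1 (hMu z)).2⟩
  have hbl : BddBelow (Set.range u₀) := ⟨-Mu, by rintro a ⟨z, rfl⟩; exact (abs_le.1 (hMu z)).1⟩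
  have hle : ∀ t : V, u₀ t ≤ (⨆ z, u₀ z) := fun t => le_ciSup hbu t
  have hge : ∀ t : V, (⨅ z, u₀ z) ≤ u₀ t := fun t => ciInf_le hbl t
  intro m
  induction m with
  | zero =>
    intro x
    constructor
    · show u₀ x ≤ (0:ℝ) + (⨆ z, u₀ z)
      have := hle x
      linarith
    · show (0:ℝ) + (⨅ z, u₀ z) ≤ u₀ x
      have := hge x
      linarith
  | succ m ihm =>
    intro x
    obtain ⟨Cv, hCv⟩ := gameVal_bound (u₀ := fun _ => (0:ℝ)) hf ⟨0, fun z => by simp⟩ hnbr m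
    have hub : ∀ z : V, gameVal adj f u₀ m z ≤ gameVal adj f (fun _ => (0:ℝ)) m z + (⨆ z, u₀ z) :=
      fun z => (ihm z).1
    have hlb : ∀ z : V, gameVal adj f (fun _ => (0:ℝ)) m z + (⨅ z, u₀ z) ≤ gameVal adj f u₀ m z :=
      fun z => (ihm z).2
    have hu1 : sSup (gameVal adj f u₀ m '' {w | adj x w}) ≤
        sSup (gameVal adj f (fun _ => (0:ℝ)) m '' {w | adj x w}) + (⨆ z, u₀ z) := by
      refine sSup_image_le (hnbr x) (fun z hz => ?_)
      have h1 : gameVal adj f (fun _ => (0:ℝ)) m z ≤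
          sSup (gameVal adj f (fun _ => (0:ℝ)) m '' {w | adj x w}) :=
        le_sSup_image hz (fun w _ => (abs_le.1 (hCv w)).2)
      have := hub z
      linarith
    have hu2 : sInf (gameVal adj f u₀ m '' {w | adj x w}) ≤
        sInf (gameVal adj f (fun _ => (0:ℝ)) m '' {w | adj x w}) + (⨆ z, u₀ z) := by
      have h2 : ∀ z ∈ {w | adj x w},
          sInf (gameVal adj f u₀ m '' {w | adj x w}) - (⨆ z, u₀ z) ≤
            gameVal adj f (fun _ => (0:ℝ)) m z := by
        intro z hz
        have h3 : sInf (gameVal adj f u₀ m '' {w | adj x w}) ≤ gameVal adj f u₀ m z :=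
          sInf_image_le hz (fun w _ => le_trans (by
            have := (abs_le.1 (hCv w)).1
            have := hge w
            linarith : -Cv + (⨅ z, u₀ z) ≤ gameVal adj f (fun _ => (0:ℝ)) m w + (⨅ z, u₀ z))
            (hlb w))
        have := hub z
        linarith
      have := le_sInf_image (hnbr x) h2
      linarith
    have hl1 : sSup (gameVal adj f (fun _ => (0:ℝ)) m '' {w | adj x w}) + (⨅ z, u₀ z) ≤
        sSup (gameVal adj f u₀ m '' {w | adj x w}) := by
      have h2 : ∀ z ∈ {w | adj x w},
          gameVal adj f (fun _ => (0:ℝ)) m z ≤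
            sSup (gameVal adj f u₀ m '' {w | adj x w}) - (⨅ z, u₀ z) := by
        intro z hz
        have h3 : gameVal adj f u₀ m z ≤ sSup (gameVal adj f u₀ m '' {w | adj x w}) :=
          le_sSup_image (C := Cv + (⨆ z, u₀ z)) hz (fun w _ => le_trans (hub w) (by
            have := (abs_le.1 (hCv w)).2
            linarith))
        have := hlb z
        linarith
      have := sSup_image_le (hnbr x) h2
      linarith
    have hl2 : sInf (gameVal adj f (fun _ => (0:ℝ)) m '' {w | adj x w}) + (⨅ z, u₀ z) ≤
        sInf (gameVal adj f u₀ m '' {w | adj x w}) := by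
      refine le_sInf_image (hnbr x) (fun z hz => ?_)
      have h3 : sInf (gameVal adj f (fun _ => (0:ℝ)) m '' {w | adj x w}) ≤
          gameVal adj f (fun _ => (0:ℝ)) m z :=
        sInf_image_le hz (fun w _ => (abs_le.1 (hCv w)).1)
      have := hlb z
      linarith
    constructor
    · rw [gameVal_succ, gameVal_succ]
      linarith
    · rw [gameVal_succ, gameVal_succ]
      linarith

end TOW

/-- On a connected graph of finite diameter, the oscillation of the
game values is bounded:
`sup u_n − inf u_n ≤ (sup u₀ − inf u₀) + diam(G)²·(sup f − inf f)` for all `n`. -/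
theorem game_values_oscillation_bound {V : Type*} (adj : V → V → Prop)
    (hsymm : Symmetric adj)
    (hdiam : ∃ D : ℕ, ∀ x y : V, ∃ n ≤ D, ReachesIn adj n x y)
    (f u₀ : V → ℝ) (hf : ∃ M : ℝ, ∀ x, |f x| ≤ M) (hu₀ : ∃ M : ℝ, ∀ x, |u₀ x| ≤ M) :
    ∀ n : ℕ,
      (⨆ x : V, gameVal adj f u₀ n x) - (⨅ x : V, gameVal adj f u₀ n x) ≤
        ((⨆ x : V, u₀ x) - (⨅ x : V, u₀ x)) +
          (graphDiam adj : ℝ) ^ 2 * ((⨆ x : V, f x) - (⨅ x : V, f x)) := by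
  intro n
  rcases isEmpty_or_nonempty V with hV | hV
  · have hsup : ∀ g : V → ℝ, (⨆ x, g x) = 0 := fun g => by
      rw [iSup, Set.range_eq_empty g, Real.sSup_empty]
    have hinf : ∀ g : V → ℝ, (⨅ x, g x) = 0 := fun g => by
      rw [iInf, Set.range_eq_empty g, Real.sInf_empty]
    rw [hsup, hsup, hsup, hinf, hinf, hinf]
    norm_num
  · haveI := hV
    have hd : ∀ a b : V, ∃ m, ReachesIn adj m a b := by
      obtain ⟨D₀, hD₀⟩ := hdiam
      intro a b
      obtain ⟨m, _, h⟩ := hD₀ a b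
      exact ⟨m, h⟩
    have hdle : ∀ a b : V, graphDist adj a b ≤ graphDiam adj :=
      TOW.graphDist_le_diam hdiam
    rcases Nat.eq_zero_or_pos (graphDiam adj) with hD0 | hDpos
    · -- diameter zero: V is a subsingleton
      have hsub : ∀ a b : V, a = b := fun a b =>
        TOW.graphDist_eq_zero_imp hd (by have := hdle a b; omega)
      obtain ⟨x₀⟩ := hV
      have hsup : ∀ g : V → ℝ, (⨆ x, g x) = g x₀ := fun g => by
        have hcon : ∀ x : V, g x = g x₀ := fun x => by rw [hsub x x₀]
        refine le_antisymm (ciSup_le fun x => (hcon x).le) ?_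
        exact le_ciSup ⟨g x₀, by rintro a ⟨x, rfl⟩; exact (hcon x).le⟩ x₀
      have hinf : ∀ g : V → ℝ, (⨅ x, g x) = g x₀ := fun g => by
        have hcon : ∀ x : V, g x = g x₀ := fun x => by rw [hsub x x₀]
        refine le_antisymm (ciInf_le ⟨g x₀, by rintro a ⟨x, rfl⟩; exact (hcon x).ge⟩ x₀) ?_
        exact le_ciInf fun x => (hcon x).ge
      rw [hsup, hsup, hsup, hinf, hinf, hinf]
      simp
    · -- main case: diameter ≥ 1
      obtain ⟨a₀, b₀, hab⟩ := TOW.diam_mem hV hdiam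
      have hane : a₀ ≠ b₀ := by
        intro h
        subst h
        rw [TOW.graphDist_self] at hab
        omega
      have hnbr : ∀ x : V, {y | adj x y}.Nonempty := by
        intro x
        obtain ⟨y, hy⟩ : ∃ y : V, y ≠ x := by
          by_cases hxa : x = a₀
          · exact ⟨b₀, fun h => hane ((h.trans hxa).symm)⟩
          · exact ⟨a₀, fun h => hxa h.symm⟩
        have h0 : graphDist adj x y ≠ 0 := fun h =>
          hy (TOW.graphDist_eq_zero_imp hd h).symm
        obtain ⟨m, hm⟩ : ∃ m, graphDist adj x y = m + 1 :=
          ⟨graphDist adj x y - 1, by omega⟩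
        have r := TOW.graphDist_reaches hd x y
        rw [hm] at r
        obtain ⟨z, hz, _⟩ := r
        exact ⟨z, hz⟩
      obtain ⟨Mf, hMf⟩ := hf
      have hbddA : BddAbove (Set.range f) :=
        ⟨Mf, by rintro a ⟨z, rfl⟩; exact (abs_le.1 (hMf z)).2⟩
      have hbddB : BddBelow (Set.range f) :=
        ⟨-Mf, by rintro a ⟨z, rfl⟩; exact (abs_le.1 (hMf z)).1⟩
      have hosc : 0 ≤ (⨆ z, f z) - ⨅ z, f z := by
        obtain ⟨z⟩ := hV
        have h1 : f z ≤ ⨆ w, f w := le_ciSup hbddA z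
        have h2 : (⨅ w, f w) ≤ f z := ciInf_le hbddB z
        linarith
      -- core bound for the zero-terminal values
      have hcore : ∀ x y : V,
          gameVal adj f (fun _ => (0:ℝ)) n x - gameVal adj f (fun _ => (0:ℝ)) n y ≤
            (graphDiam adj : ℝ) ^ 2 * ((⨆ z, f z) - ⨅ z, f z) := by
        rcases eq_or_lt_of_le (show 1 ≤ graphDiam adj from hDpos) with hD1 | hD2
        · -- diameter = 1
          intro x y
          by_cases hxy : x = y
          · subst hxy
            rw [sub_self]
            positivity
          · have hmain := TOW.core_eq1 hsymm hdiam hV ⟨Mf, hMf⟩ hnbr hD1.symm n x y hxy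
            have hminle : min 0 (f x - f y) ≤ 0 := min_le_left _ _
            have hsq : (graphDiam adj : ℝ) ^ 2 = 1 := by
              rw [← hD1]
              norm_num
            rw [hsq]
            linarith
        · -- diameter ≥ 2
          intro x y
          have hD2' : 2 ≤ graphDiam adj := hD2
          have hmain := TOW.core_ge2 hsymm hdiam hV ⟨Mf, hMf⟩ hnbr hD2' n x y
          have h1 : TOW.bb (graphDiam adj) (graphDist adj x y) ≤
              TOW.bb (graphDiam adj) (graphDiam adj) := TOW.bb_mono (hdle x y) (le_refl _)
          have h2 : TOW.bb (graphDiam adj) (graphDiam adj) ≤ (graphDiam adj : ℝ) ^ 2 :=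
            TOW.bb_le_sq
          have h3 := mul_le_mul_of_nonneg_right h1 hosc
          have h4 := mul_le_mul_of_nonneg_right h2 hosc
          linarith
      -- reduction to the zero-terminal values
      have hred := TOW.reduction ⟨Mf, hMf⟩ hu₀ hnbr
      obtain ⟨Cv, hCv⟩ := TOW.gameVal_bound (u₀ := fun _ => (0:ℝ)) ⟨Mf, hMf⟩
        ⟨0, fun z => by simp⟩ hnbr n
      have hbAv : BddAbove (Set.range (gameVal adj f (fun _ => (0:ℝ)) n)) :=
        ⟨Cv, by rintro a ⟨z, rfl⟩; exact (abs_le.1 (hCv z)).2⟩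
      have hbBv : BddBelow (Set.range (gameVal adj f (fun _ => (0:ℝ)) n)) :=
        ⟨-Cv, by rintro a ⟨z, rfl⟩; exact (abs_le.1 (hCv z)).1⟩
      have h1 : (⨆ x, gameVal adj f u₀ n x) ≤
          (⨆ x, gameVal adj f (fun _ => (0:ℝ)) n x) + (⨆ z, u₀ z) := by
        refine ciSup_le fun x => ?_
        have h2 := (hred n x).1
        have h3 : gameVal adj f (fun _ => (0:ℝ)) n x ≤
            ⨆ x, gameVal adj f (fun _ => (0:ℝ)) n x := le_ciSup hbAv x
        linarith
      have h2 : (⨅ x, gameVal adj f (fun _ => (0:ℝ)) n x) + (⨅ z, u₀ z) ≤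
          ⨅ x, gameVal adj f u₀ n x := by
        refine le_ciInf fun x => ?_
        have h3 := (hred n x).2
        have h4 : (⨅ x, gameVal adj f (fun _ => (0:ℝ)) n x) ≤
            gameVal adj f (fun _ => (0:ℝ)) n x := ciInf_le hbBv x
        linarith
      have h3 : (⨆ x, gameVal adj f (fun _ => (0:ℝ)) n x) ≤
          (⨅ x, gameVal adj f (fun _ => (0:ℝ)) n x) +
            (graphDiam adj : ℝ) ^ 2 * ((⨆ z, f z) - ⨅ z, f z) := by
        refine ciSup_le fun x => ?_
        have h4 : gameVal adj f (fun _ => (0:ℝ)) n x -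
            (graphDiam adj : ℝ) ^ 2 * ((⨆ z, f z) - ⨅ z, f z) ≤
              ⨅ y, gameVal adj f (fun _ => (0:ℝ)) n y := by
          refine le_ciInf fun y => ?_
          have := hcore x y
          linarith
        linarith
      linarith
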